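/- Let σ : [0,∞) → ℝ be a locally Lipschitz function and let C, a > 0 be constants such that for almost every t ≥ 0 (with respect to Lebesgue measure), σ is differentiable at t and σ'(t) ≤ −σ(t)² + 1 + C e^{-at}. Then there exists a constant C' > 0 depending only on C and a such that for all t ≥ 0: σ(t) ≤ 1 + (σ(0) + C')·ρ(t), where ρ(t) = e^{-at} if 0 < a < 2, ρ(t) = (t+1)e^{-2t} if a = 2, and ρ(t) = e^{-2t} if a > 2. -/

import Mathlib

open Real MeasureTheory Set Filter




/-- Bound on the derivative from a Lipschitz bound on a neighborhood. -/
lemma abs_deriv_le_of_lip {f : ℝ → ℝ} {K : NNReal} {s : Set ℝ} {x : ℝ}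
    (hs : s ∈ nhds x) (hK : LipschitzOnWith K f s) : |deriv f x| ≤ K := by
  by_cases hdiff : DifferentiableAt ℝ f x
  · have hslope := hasDerivAt_iff_tendsto_slope.1 hdiff.hasDerivAt
    have habs : Tendsto (fun y => |slope f x y|) (nhdsWithin x {x}ᶜ) (nhds |deriv f x|) :=
      (continuous_abs.tendsto _).comp hslope
    refine le_of_tendsto habs ?_
    have hev0 : ∀ᶠ y in nhds x, y ∈ s := hs
    have hev : ∀ᶠ y in nhdsWithin x {x}ᶜ, y ∈ s := hev0.filter_mono nhdsWithin_le_nhds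
    filter_upwards [hev, self_mem_nhdsWithin] with y hy hyx
    have hxs : x ∈ s := mem_of_mem_nhds hs
    have := (lipschitzOnWith_iff_dist_le_mul.1 hK) y hy x hxs
    rw [slope_def_field, abs_div]
    rw [Real.dist_eq, Real.dist_eq] at this
    have hne : |y - x| ≠ 0 := by
      simp only [ne_eq, abs_eq_zero, sub_eq_zero]
      exact fun h => hyx (by simp [h])
    rw [div_le_iff₀ (lt_of_le_of_ne (abs_nonneg _) (Ne.symm hne))]
    simpa [abs_sub_comm] using this
  · simp [deriv_zero_of_not_differentiableAt hdiff]

/-- FTC for a locally Lipschitz function differentiable a.e. -/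
lemma lip_ftc {f : ℝ → ℝ} {s t : ℝ} (hst : s ≤ t) {K : NNReal}
    (hcont : Continuous f) (hK : LipschitzOnWith K f (Set.Icc s (t+1)))
    (hd : ∀ᵐ x ∂volume, x ∈ Set.Ioo s t → DifferentiableAt ℝ f x) :
    IntegrableOn (deriv f) (Set.Ioc s t) volume ∧
      f t - f s = ∫ x in Set.Ioc s t, deriv f x := by
  rcases eq_or_lt_of_le hst with rfl | hlt
  · simp
  -- the deriv is bounded on the open interval
  have derivb : ∀ x ∈ Set.Ioo s t, |deriv f x| ≤ K := by
    intro x hx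
    refine abs_deriv_le_of_lip ?_ hK
    refine mem_of_superset (Ioo_mem_nhds hx.1 (lt_of_lt_of_le hx.2 (by linarith))) ?_
    intro y hy; exact ⟨hy.1.le, by linarith [hy.2]⟩
  have htne : ∀ᵐ x : ℝ ∂volume, x ≠ t := by
    rw [ae_iff]
    have : {x : ℝ | ¬x ≠ t} = {t} := by ext y; simp
    rw [this]; exact Real.volume_singleton
  have hmemIoo : ∀ᵐ x ∂(volume.restrict (Set.Ioc s t)), x ∈ Set.Ioo s t := by
    filter_upwards [ae_restrict_mem measurableSet_Ioc, ae_restrict_of_ae htne] with x hx hxt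
    exact ⟨hx.1, lt_of_le_of_ne hx.2 hxt⟩
  have hint : IntegrableOn (deriv f) (Set.Ioc s t) volume := by
    refine Integrable.mono' (g := fun _ => (K:ℝ)) (integrableOn_const ?_)
      (measurable_deriv f).aestronglyMeasurable ?_
    · rw [Real.volume_Ioc]; exact ENNReal.ofReal_lt_top.ne
    · filter_upwards [hmemIoo] with x hx
      simpa using derivb x hx
  refine ⟨hint, ?_⟩
  set u : ℕ → ℝ := fun n => (1:ℝ)/(n+1) with hu_def
  have hu0 : ∀ n, 0 < u n := fun n => by positivity
  have hu1 : ∀ n, u n ≤ 1 := by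
    intro n
    rw [hu_def]
    rw [div_le_one (by positivity)]
    simp
  have hulim : Tendsto u atTop (nhds 0) := tendsto_one_div_add_atTop_nhds_zero_nat
  set F : ℕ → ℝ → ℝ := fun n x => (f (x + u n) - f x) / u n with hF_def
  -- dominated convergence
  have hdct : Tendsto (fun n => ∫ x in Set.Ioc s t, F n x) atTop
      (nhds (∫ x in Set.Ioc s t, deriv f x)) := by
    refine tendsto_integral_of_dominated_convergence (fun _ => (K:ℝ)) ?_ ?_ ?_ ?_
    · intro n
      exact (((hcont.comp (continuous_add_right (u n))).sub hcont).div_const _).aestronglyMeasurable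
    · exact integrableOn_const (by rw [Real.volume_Ioc]; exact ENNReal.ofReal_lt_top.ne)
    · intro n
      filter_upwards [ae_restrict_mem measurableSet_Ioc] with x hx
      have hx1 : x ∈ Set.Icc s (t+1) := ⟨le_of_lt hx.1, by linarith [hx.2]⟩
      have hx2 : x + u n ∈ Set.Icc s (t+1) := by
        constructor
        · linarith [hx.1.le, (hu0 n).le]
        · linarith [hx.2, hu1 n]
      have := (lipschitzOnWith_iff_dist_le_mul.1 hK) (x + u n) hx2 x hx1
      rw [Real.dist_eq, Real.dist_eq] at this
      rw [hF_def]
      simp only [Real.norm_eq_abs, abs_div, abs_of_pos (hu0 n)]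
      rw [div_le_iff₀ (hu0 n)]
      calc |f (x + u n) - f x| ≤ K * |x + u n - x| := this
        _ = K * u n := by rw [add_sub_cancel_left, abs_of_pos (hu0 n)]
    · filter_upwards [hmemIoo, ae_restrict_of_ae hd] with x hx hdx
      have hdiff := hdx hx
      have hslope := hasDerivAt_iff_tendsto_slope.1 hdiff.hasDerivAt
      have hseq : Tendsto (fun n => x + u n) atTop (nhdsWithin x {x}ᶜ) := by
        rw [tendsto_nhdsWithin_iff]
        constructor
        · have : Tendsto (fun n => x + u n) atTop (nhds (x + 0)) :=
            tendsto_const_nhds.add hulim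
          simpa using this
        · filter_upwards with n
          simp only [mem_compl_iff, mem_singleton_iff]
          intro h
          exact absurd (by linarith [hu0 n] : (0:ℝ) < 0) (lt_irrefl 0)
      have := hslope.comp hseq
      have heq : (slope f x ∘ fun n => x + u n) = fun n => F n x := by
        funext n
        simp only [Function.comp_apply, hF_def]
        rw [slope_def_field, add_sub_cancel_left]
      rwa [heq] at this
  -- the other limit
  have hother : Tendsto (fun n => ∫ x in Set.Ioc s t, F n x) atTop (nhds (f t - f s)) := by
    have hint_f : ∀ c d : ℝ, IntervalIntegrable f volume c d := fun c d =>
      hcont.intervalIntegrable c d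
    have key : ∀ n, ∫ x in Set.Ioc s t, F n x =
        (u n)⁻¹ * (∫ x in t..(t + u n), f x) - (u n)⁻¹ * (∫ x in s..(s + u n), f x) := by
      intro n
      rw [← intervalIntegral.integral_of_le hlt.le]
      have h1 : ∫ x in s..t, F n x = (u n)⁻¹ * ((∫ x in s..t, f (x + u n)) - ∫ x in s..t, f x) := by
        rw [hF_def]
        simp only [div_eq_inv_mul]
        rw [intervalIntegral.integral_const_mul]
        congr 1
        exact intervalIntegral.integral_sub ((hcont.comp (continuous_add_right (u n))).intervalIntegrable _ _) (hint_f s t)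
      rw [h1, intervalIntegral.integral_comp_add_right]
      have c1 : (∫ x in s..(s + u n), f x) + ∫ x in (s + u n)..(t + u n), f x =
          ∫ x in s..(t + u n), f x := intervalIntegral.integral_add_adjacent_intervals (hint_f _ _) (hint_f _ _)
      have c2 : (∫ x in s..t, f x) + ∫ x in t..(t + u n), f x =
          ∫ x in s..(t + u n), f x := intervalIntegral.integral_add_adjacent_intervals (hint_f _ _) (hint_f _ _)
      have : (∫ x in (s + u n)..(t + u n), f x) - ∫ x in s..t, f x =
          (∫ x in t..(t + u n), f x) - ∫ x in s..(s + u n), f x := by linarith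
      linear_combination (u n)⁻¹ * this
    simp only [key]
    have hlim : ∀ c : ℝ, Tendsto (fun n => (u n)⁻¹ * ∫ x in c..(c + u n), f x) atTop (nhds (f c)) := by
      intro c
      have hG : HasDerivAt (fun y => ∫ x in c..y, f x) (f c) c :=
        intervalIntegral.integral_hasDerivAt_right (hint_f c c)
          hcont.stronglyMeasurable.stronglyMeasurableAtFilter hcont.continuousAt
      have hslope := hasDerivAt_iff_tendsto_slope.1 hG
      have hseq : Tendsto (fun n => c + u n) atTop (nhdsWithin c {c}ᶜ) := by
        rw [tendsto_nhdsWithin_iff]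
        refine ⟨by simpa using (tendsto_const_nhds.add hulim), ?_⟩
        filter_upwards with n
        simp only [mem_compl_iff, mem_singleton_iff]
        intro h
        exact absurd (by linarith [hu0 n] : (0:ℝ) < 0) (lt_irrefl 0)
      have := hslope.comp hseq
      have heq : (slope (fun y => ∫ x in c..y, f x) c ∘ fun n => c + u n) =
          fun n => (u n)⁻¹ * ∫ x in c..(c + u n), f x := by
        funext n
        simp only [Function.comp_apply]
        rw [slope_def_field, add_sub_cancel_left, intervalIntegral.integral_same, sub_zero,
          div_eq_inv_mul]
      rwa [heq] at this
    exact (hlim t).sub (hlim s)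
  exact tendsto_nhds_unique hother hdct

lemma exists_lipschitzOnWith_Icc {f : ℝ → ℝ} (hf : LocallyLipschitz f) (a b : ℝ) :
    ∃ K : NNReal, LipschitzOnWith K f (Set.Icc a b) := by
  by_contra hcon
  push_neg at hcon
  have H : ∀ n : ℕ, ∃ p : ℝ × ℝ, p.1 ∈ Set.Icc a b ∧ p.2 ∈ Set.Icc a b ∧
      (n : ℝ) * dist p.1 p.2 < dist (f p.1) (f p.2) := by
    intro n
    have := hcon (n : NNReal)
    rw [lipschitzOnWith_iff_dist_le_mul] at this
    push_neg at this
    obtain ⟨x, hx, y, hy, hxy⟩ := this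
    exact ⟨(x, y), hx, hy, by simpa using hxy⟩
  choose p hp1 hp2 hp3 using H
  have hcpt : IsCompact (Set.Icc a b ×ˢ Set.Icc a b) := isCompact_Icc.prod isCompact_Icc
  obtain ⟨q, hq, φ, hφ, hconv⟩ := hcpt.tendsto_subseq (x := p) (fun n => ⟨hp1 n, hp2 n⟩)
  have hconv1 : Tendsto (fun n => (p (φ n)).1) atTop (nhds q.1) :=
    (continuous_fst.tendsto q).comp hconv
  have hconv2 : Tendsto (fun n => (p (φ n)).2) atTop (nhds q.2) :=
    (continuous_snd.tendsto q).comp hconv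
  by_cases hq12 : q.1 = q.2
  · -- both converge to same point; use local Lipschitz bound there
    obtain ⟨K, t, ht, hK⟩ := hf q.1
    rw [lipschitzOnWith_iff_dist_le_mul] at hK
    have h1 : ∀ᶠ n in atTop, (p (φ n)).1 ∈ t := hconv1.eventually (by exact ht)
    have h2 : ∀ᶠ n in atTop, (p (φ n)).2 ∈ t := by
      rw [hq12] at ht; exact hconv2.eventually (by exact ht)
    have h3 : ∀ᶠ n in atTop, (K : ℝ) < (φ n : ℝ) := by
      have : Tendsto (fun n => (φ n : ℝ)) atTop atTop :=
        tendsto_natCast_atTop_atTop.comp hφ.tendsto_atTop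
      exact this.eventually_gt_atTop _
    obtain ⟨n, hn1, hn2, hn3⟩ := (h1.and (h2.and h3)).exists
    have hlip := hK _ hn1 _ hn2
    have hlow := hp3 (φ n)
    have hd0 : 0 ≤ dist (p (φ n)).1 (p (φ n)).2 := dist_nonneg
    rcases eq_or_lt_of_le hd0 with heq | hpos
    · have : dist (f (p (φ n)).1) (f (p (φ n)).2) = 0 := by
        have : (p (φ n)).1 = (p (φ n)).2 := by
          rwa [eq_comm, dist_eq_zero] at heq
        simp [this]
      rw [this] at hlow
      nlinarith [dist_nonneg (x := (p (φ n)).1) (y := (p (φ n)).2), hn3]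
    · nlinarith [hn3]
  · -- distinct limit points: contradiction with continuity
    have hd : 0 < dist q.1 q.2 := dist_pos.2 hq12
    have hfd : Tendsto (fun n => dist (f (p (φ n)).1) (f (p (φ n)).2)) atTop
        (nhds (dist (f q.1) (f q.2))) :=
      ((hf.continuous.tendsto q.1).comp hconv1).dist ((hf.continuous.tendsto q.2).comp hconv2)
    have hdd : Tendsto (fun n => dist (p (φ n)).1 (p (φ n)).2) atTop (nhds (dist q.1 q.2)) :=
      hconv1.dist hconv2
    have h1 : ∀ᶠ n in atTop, dist q.1 q.2 / 2 < dist (p (φ n)).1 (p (φ n)).2 :=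
      hdd.eventually (eventually_gt_nhds (by linarith))
    have h2 : ∀ᶠ n in atTop, dist (f (p (φ n)).1) (f (p (φ n)).2) < dist (f q.1) (f q.2) + 1 :=
      hfd.eventually (eventually_lt_nhds (by linarith))
    have h3 : ∀ᶠ n in atTop, (dist (f q.1) (f q.2) + 1) / (dist q.1 q.2 / 2) < (φ n : ℝ) := by
      have : Tendsto (fun n => (φ n : ℝ)) atTop atTop :=
        tendsto_natCast_atTop_atTop.comp hφ.tendsto_atTop
      exact this.eventually_gt_atTop _
    obtain ⟨n, hn1, hn2, hn3⟩ := (h1.and (h2.and h3)).exists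
    have hlow := hp3 (φ n)
    have key : (dist (f q.1) (f q.2) + 1) < (φ n : ℝ) * (dist q.1 q.2 / 2) := by
      rw [div_lt_iff₀ (by linarith)] at hn3
      linarith
    have : (φ n : ℝ) * (dist q.1 q.2 / 2) ≤ (φ n : ℝ) * dist (p (φ n)).1 (p (φ n)).2 := by
      have hφn : (0:ℝ) ≤ (φ n : ℝ) := Nat.cast_nonneg _
      nlinarith
    linarith [hn2]

lemma locLip_mul {f g : ℝ → ℝ} (hf : LocallyLipschitz f) (hg : LocallyLipschitz g) :
    LocallyLipschitz (fun x => f x * g x) := by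
  intro x
  obtain ⟨K1, s1, hs1, hK1⟩ := hf x
  obtain ⟨K2, s2, hs2, hK2⟩ := hg x
  rw [lipschitzOnWith_iff_dist_le_mul] at hK1 hK2
  set t := s1 ∩ s2 ∩ Metric.closedBall x 1 with ht_def
  have hxt : t ∈ nhds x :=
    Filter.inter_mem (Filter.inter_mem hs1 hs2) (Metric.closedBall_mem_nhds x one_pos)
  have hx1 : x ∈ s1 := mem_of_mem_nhds hs1
  have hx2 : x ∈ s2 := mem_of_mem_nhds hs2
  set A : ℝ := |f x| + K1 with hA_def
  set B : ℝ := |g x| + K2 with hB_def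
  have hbf : ∀ y ∈ t, |f y| ≤ A := by
    intro y hy
    have := hK1 y hy.1.1 x hx1
    rw [Real.dist_eq] at this
    have hd : dist y x ≤ 1 := Metric.mem_closedBall.1 hy.2
    have h1 : |f y - f x| ≤ K1 := le_trans this (by nlinarith [NNReal.coe_nonneg K1])
    calc |f y| = |f y - f x + f x| := by ring_nf
      _ ≤ |f y - f x| + |f x| := abs_add_le _ _
      _ ≤ A := by rw [hA_def]; linarith
  have hbg : ∀ y ∈ t, |g y| ≤ B := by
    intro y hy
    have := hK2 y hy.1.2 x hx2
    rw [Real.dist_eq] at this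
    have hd : dist y x ≤ 1 := Metric.mem_closedBall.1 hy.2
    have h1 : |g y - g x| ≤ K2 := le_trans this (by nlinarith [NNReal.coe_nonneg K2])
    calc |g y| = |g y - g x + g x| := by ring_nf
      _ ≤ |g y - g x| + |g x| := abs_add_le _ _
      _ ≤ B := by rw [hB_def]; linarith
  refine ⟨(A * K2 + B * K1).toNNReal, t, hxt, ?_⟩
  rw [lipschitzOnWith_iff_dist_le_mul]
  intro y hy z hz
  have hA0 : (0:ℝ) ≤ A := by rw [hA_def]; positivity
  have hB0 : (0:ℝ) ≤ B := by rw [hB_def]; positivity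
  have hcoe : ((A * K2 + B * K1).toNNReal : ℝ) = A * K2 + B * K1 :=
    Real.coe_toNNReal _ (by positivity)
  rw [hcoe, Real.dist_eq, Real.dist_eq]
  have e1 : f y * g y - f z * g z = f y * (g y - g z) + g z * (f y - f z) := by ring
  rw [e1]
  calc |f y * (g y - g z) + g z * (f y - f z)|
      ≤ |f y * (g y - g z)| + |g z * (f y - f z)| := abs_add_le _ _
    _ = |f y| * |g y - g z| + |g z| * |f y - f z| := by rw [abs_mul, abs_mul]
    _ ≤ A * (K2 * |y - z|) + B * (K1 * |y - z|) := by
        have u1 := hK2 y hy.1.2 z hz.1.2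
        have u2 := hK1 y hy.1.1 z hz.1.1
        rw [Real.dist_eq, Real.dist_eq] at u1 u2
        have := hbf y hy
        have := hbg z hz
        have h0 : (0:ℝ) ≤ |y - z| := abs_nonneg _
        nlinarith [abs_nonneg (f y), abs_nonneg (g z), abs_nonneg (g y - g z),
          abs_nonneg (f y - f z), NNReal.coe_nonneg K1, NNReal.coe_nonneg K2]
    _ = (A * K2 + B * K1) * |y - z| := by ring

lemma locLip_inv {f : ℝ → ℝ} (hf : LocallyLipschitz f) (hneg : ∀ x, f x ≤ -1) :
    LocallyLipschitz (fun x => (f x)⁻¹) := by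
  intro x
  obtain ⟨K, s, hs, hK⟩ := hf x
  rw [lipschitzOnWith_iff_dist_le_mul] at hK
  refine ⟨K, s, hs, ?_⟩
  rw [lipschitzOnWith_iff_dist_le_mul]
  intro y hy z hz
  have hKyz := hK y hy z hz
  rw [Real.dist_eq, Real.dist_eq] at *
  have hy1 : f y ≤ -1 := hneg y
  have hz1 : f z ≤ -1 := hneg z
  have hy0 : f y ≠ 0 := by intro h; rw [h] at hy1; linarith
  have hz0 : f z ≠ 0 := by intro h; rw [h] at hz1; linarith
  have e1 : (f y)⁻¹ - (f z)⁻¹ = (f z - f y) / (f y * f z) := by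
    field_simp
  rw [e1, abs_div, abs_mul]
  have hay : 1 ≤ |f y| := by rw [abs_of_nonpos (by linarith)]; linarith
  have haz : 1 ≤ |f z| := by rw [abs_of_nonpos (by linarith)]; linarith
  have h1 : |f z - f y| ≤ K * |y - z| := by rwa [abs_sub_comm]
  have h2 : (1:ℝ) ≤ |f y| * |f z| := by nlinarith
  calc |f z - f y| / (|f y| * |f z|) ≤ |f z - f y| / 1 :=
        div_le_div_of_nonneg_left (abs_nonneg _) one_pos h2 |>.trans_eq rfl
    _ = |f z - f y| := div_one _
    _ ≤ K * |y - z| := h1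

lemma lip_ftc_le {f φ : ℝ → ℝ} {s t : ℝ} (hst : s ≤ t)
    (hf : LocallyLipschitz f) (hφ : Continuous φ)
    (hd : ∀ᵐ x ∂volume, x ∈ Set.Ioo s t → DifferentiableAt ℝ f x ∧ deriv f x ≤ φ x) :
    f t - f s ≤ ∫ x in s..t, φ x := by
  obtain ⟨K, hK⟩ := exists_lipschitzOnWith_Icc hf s (t+1)
  obtain ⟨hint, heq⟩ := lip_ftc hst hf.continuous hK (hd.mono fun x h hx => (h hx).1)
  rw [heq, intervalIntegral.integral_of_le hst]
  have htne : ∀ᵐ x : ℝ ∂volume, x ≠ t := by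
    rw [ae_iff]
    have : {x : ℝ | ¬x ≠ t} = {t} := by ext y; simp
    rw [this]; exact Real.volume_singleton
  refine setIntegral_mono_ae_restrict hint (hφ.integrableOn_Ioc) ?_
  filter_upwards [ae_restrict_mem measurableSet_Ioc, ae_restrict_of_ae htne,
    ae_restrict_of_ae hd] with x h1 h2 h3
  exact (h3 ⟨h1.1, lt_of_le_of_ne h1.2 h2⟩).2

lemma lip_ftc_ge {f : ℝ → ℝ} {δ : ℝ} {s t : ℝ} (hst : s ≤ t)
    (hf : LocallyLipschitz f)
    (hd : ∀ᵐ x ∂volume, x ∈ Set.Ioo s t → DifferentiableAt ℝ f x ∧ δ ≤ deriv f x) :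
    δ * (t - s) ≤ f t - f s := by
  obtain ⟨K, hK⟩ := exists_lipschitzOnWith_Icc hf s (t+1)
  obtain ⟨hint, heq⟩ := lip_ftc hst hf.continuous hK (hd.mono fun x h hx => (h hx).1)
  rw [heq]
  have htne : ∀ᵐ x : ℝ ∂volume, x ≠ t := by
    rw [ae_iff]
    have : {x : ℝ | ¬x ≠ t} = {t} := by ext y; simp
    rw [this]; exact Real.volume_singleton
  have hconst : ∫ _x in Set.Ioc s t, δ ∂volume = δ * (t - s) := by
    rw [setIntegral_const, measureReal_def, Real.volume_Ioc, smul_eq_mul,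
      ENNReal.toReal_ofReal (sub_nonneg.2 hst), mul_comm]
  rw [← hconst]
  refine setIntegral_mono_ae_restrict (integrableOn_const ?_) hint ?_
  · rw [Real.volume_Ioc]; exact ENNReal.ofReal_lt_top.ne
  filter_upwards [ae_restrict_mem measurableSet_Ioc, ae_restrict_of_ae htne,
    ae_restrict_of_ae hd] with x h1 h2 h3
  exact (h3 ⟨h1.1, lt_of_le_of_ne h1.2 h2⟩).2


lemma lower_bound (C a : ℝ) (hC : 0 < C) (ha : 0 < a) (σ : ℝ → ℝ)
    (hσ : LocallyLipschitz σ)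
    (hA : ∀ᵐ x : ℝ ∂volume, x ∈ Set.Ici (0:ℝ) →
      DifferentiableAt ℝ σ x ∧ deriv σ x ≤ -σ x ^ 2 + 1 + C * Real.exp (-a * x)) :
    -(Real.sqrt (1+C) + 1) ≤ σ 0 := by
  set R := Real.sqrt (1+C) with hR_def
  have hR0 : 0 ≤ R := Real.sqrt_nonneg _
  have hR2 : R ^ 2 = 1 + C := Real.sq_sqrt (by linarith)
  have hR1 : 1 < R := by nlinarith
  by_contra h0
  push_neg at h0
  -- Claim 1 : σ stays below -R forever
  have claim1 : ∀ u : ℝ, 0 ≤ u → σ u < -R := by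
    intro t1 ht1
    by_contra hc
    push_neg at hc
    have ht1pos : 0 < t1 := by
      rcases eq_or_lt_of_le ht1 with rfl | h
      · linarith
      · exact h
    set S := {u : ℝ | u ∈ Set.Icc 0 t1 ∧ -R ≤ σ u} with hS_def
    have hSclosed : IsClosed S := by
      have : S = Set.Icc 0 t1 ∩ σ ⁻¹' (Set.Ici (-R)) := by
        ext u; simp [hS_def, Set.mem_Ici]
      rw [this]
      exact isClosed_Icc.inter (isClosed_Ici.preimage hσ.continuous)
    have hScpt : IsCompact S := isCompact_Icc.of_isClosed_subset hSclosed (fun u hu => hu.1)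
    have hSne : S.Nonempty := ⟨t1, ⟨ht1, le_refl t1⟩, hc⟩
    set T := sInf S with hT_def
    have hTS : T ∈ S := hScpt.sInf_mem hSne
    have hT0 : 0 ≤ T := hTS.1.1
    have hσT : -R ≤ σ T := hTS.2
    have hbelow : ∀ u, 0 ≤ u → u < T → σ u < -R := by
      intro u hu0 huT
      by_contra hge
      push_neg at hge
      have huS : u ∈ S := ⟨⟨hu0, le_trans huT.le hTS.1.2⟩, hge⟩
      have : T ≤ u := csInf_le ⟨0, fun y hy => hy.1.1⟩ huS
      linarith
    have hftc := lip_ftc_le (f := σ) (φ := fun _ => (0:ℝ)) hT0 hσ continuous_const ?_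
    · simp only [intervalIntegral.integral_const, smul_eq_mul, mul_zero] at hftc
      linarith
    · filter_upwards [hA] with x hx hxm
      obtain ⟨hdiff, hineq⟩ := hx (le_of_lt hxm.1)
      refine ⟨hdiff, ?_⟩
      have hσx : σ x < -R := hbelow x (le_of_lt hxm.1) hxm.2
      have hsq : 1 + C ≤ σ x ^ 2 := by nlinarith
      have hexp : Real.exp (-a * x) ≤ 1 := by
        rw [Real.exp_le_one_iff]
        nlinarith [hxm.1]
      nlinarith
  -- Claim 2 : blow-up contradiction
  set m := fun u => min (σ u) (-1:ℝ) with hm_def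
  have hm1 : ∀ u, m u ≤ -1 := fun u => min_le_right _ _
  set h := fun u => (m u)⁻¹ with hh_def
  have hml : LocallyLipschitz m := hσ.min_const (-1)
  have hhl : LocallyLipschitz h := locLip_inv hml hm1
  set δ := (C - C * Real.exp (-a)) / (1 + C) with hδ_def
  have hea : Real.exp (-a) < 1 := by
    rw [Real.exp_lt_one_iff]; linarith
  have hδpos : 0 < δ := by
    apply div_pos
    · nlinarith
    · linarith
  set T2 := 1 + 2 / δ with hT2_def
  have hT2 : (1:ℝ) ≤ T2 := by
    have : 0 < 2 / δ := by positivity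
    rw [hT2_def]
    linarith
  have hder : ∀ᵐ x : ℝ ∂volume, x ∈ Set.Ioo 1 T2 →
      DifferentiableAt ℝ h x ∧ δ ≤ deriv h x := by
    filter_upwards [hA] with x hx hxm
    have hx0 : (0:ℝ) ≤ x := by linarith [hxm.1]
    obtain ⟨hdiff, hineq⟩ := hx hx0
    have hσx : σ x < -R := claim1 x hx0
    have hσx1 : σ x < -1 := by linarith
    have hev : ∀ᶠ y in nhds x, σ y < -1 :=
      (hσ.continuous.tendsto x).eventually (eventually_lt_nhds hσx1)
    have heqq : (fun y => (σ y)⁻¹) =ᶠ[nhds x] h := by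
      filter_upwards [hev] with y hy
      simp [hh_def, hm_def, min_eq_left hy.le]
    have hne : σ x ≠ 0 := by intro hzz; rw [hzz] at hσx1; linarith
    have hdinv : HasDerivAt (fun y => (σ y)⁻¹) (-(deriv σ x) / σ x ^ 2) x :=
      hdiff.hasDerivAt.inv hne
    have hdh : HasDerivAt h (-(deriv σ x) / σ x ^ 2) x :=
      hdinv.congr_of_eventuallyEq heqq.symm
    refine ⟨hdh.differentiableAt, ?_⟩
    rw [hdh.deriv]
    have hsq : 1 + C ≤ σ x ^ 2 := by nlinarith
    have hsqpos : 0 < σ x ^ 2 := by positivity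
    have hexp : Real.exp (-a * x) ≤ Real.exp (-a) := by
      apply Real.exp_le_exp.2
      nlinarith [hxm.1]
    rw [le_div_iff₀ hsqpos]
    have hδ1 : δ * (1 + C) = C - C * Real.exp (-a) := by
      rw [hδ_def]; field_simp
    have hδle1 : δ ≤ 1 := by
      rw [hδ_def, div_le_one (by linarith)]
      nlinarith [Real.exp_pos (-a)]
    nlinarith [mul_nonneg (sub_nonneg.2 hδle1) (sub_nonneg.2 hsq), Real.exp_pos (-a)]
  have hftc := lip_ftc_ge hT2 hhl hder
  have hb1 : -1 ≤ h 1 := by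
    have hm0 : m 1 < 0 := lt_of_le_of_lt (hm1 1) (by norm_num)
    have h1m : (1:ℝ) ≤ -(m 1) := by linarith [hm1 1]
    have := inv_le_one_of_one_le₀ h1m
    rw [inv_neg] at this
    linarith
  have hb2 : h T2 < 0 := by
    have hm0 : m T2 < 0 := lt_of_le_of_lt (hm1 T2) (by norm_num)
    exact inv_lt_zero.2 hm0
  have hval : δ * (T2 - 1) = 2 := by
    rw [hT2_def]
    field_simp
    ring
  rw [hval] at hftc
  linarith


lemma int_exp (c b t : ℝ) (hb : b ≠ 0) :
    ∫ x in (0:ℝ)..t, c * Real.exp (b*x) = c * (Real.exp (b*t) - 1)/b := by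
  have hd : ∀ x ∈ Set.uIcc (0:ℝ) t,
      HasDerivAt (fun y => c * Real.exp (b*y)/b) (c * Real.exp (b*x)) x := by
    intro x _
    have h1 : HasDerivAt (fun y : ℝ => b*y) b x := by simpa using (hasDerivAt_id x).const_mul b
    have h2 := (Real.hasDerivAt_exp (b*x)).comp x h1
    have h3 := (h2.const_mul c).div_const b
    exact h3.congr_deriv (by rw [mul_div_assoc, mul_div_cancel_right₀ _ hb])
  rw [intervalIntegral.integral_eq_sub_of_hasDerivAt hd (by apply Continuous.intervalIntegrable; fun_prop)]
  simp [Real.exp_zero]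
  ring

lemma gronwall (C a : ℝ) (hC : 0 < C) (ha : 0 < a) (σ : ℝ → ℝ)
    (hσ : LocallyLipschitz σ)
    (hA : ∀ᵐ x : ℝ ∂volume, x ∈ Set.Ici (0:ℝ) →
      DifferentiableAt ℝ σ x ∧ deriv σ x ≤ -σ x ^ 2 + 1 + C * Real.exp (-a * x))
    (t : ℝ) (ht : 0 ≤ t) :
    Real.exp (2*t) * (σ t - 1) - (σ 0 - 1) ≤ ∫ x in (0:ℝ)..t, C * Real.exp ((2-a)*x) := by
  set w := fun u => Real.exp (2*u) * (σ u - 1) with hw_def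
  have hsub : LocallyLipschitz (fun u => σ u - 1) := by
    have hL : LipschitzWith 1 (fun y : ℝ => y - 1) := by
      apply LipschitzWith.of_dist_le_mul
      intro x y
      simp [Real.dist_eq]
    exact hL.locallyLipschitz.comp hσ
  have hexpL : LocallyLipschitz (fun u : ℝ => Real.exp (2*u)) := by
    have hcd : ContDiff ℝ 1 (fun u : ℝ => Real.exp (2*u)) :=
      (Real.contDiff_exp.of_le le_top).comp (contDiff_const.mul contDiff_id)
    exact hcd.locallyLipschitz
  have hwl : LocallyLipschitz w := locLip_mul hexpL hsub
  have hφ : Continuous (fun x : ℝ => C * Real.exp ((2-a)*x)) := by fun_prop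
  have hd : ∀ᵐ x : ℝ ∂volume, x ∈ Set.Ioo 0 t →
      DifferentiableAt ℝ w x ∧ deriv w x ≤ C * Real.exp ((2-a)*x) := by
    filter_upwards [hA] with x hx hxm
    obtain ⟨hdiff, hineq⟩ := hx (le_of_lt hxm.1)
    have he : HasDerivAt (fun u : ℝ => Real.exp (2*u)) (2 * Real.exp (2*x)) x := by
      have h1 : HasDerivAt (fun u : ℝ => 2*u) 2 x := by simpa using (hasDerivAt_id x).const_mul 2
      simpa [mul_comm] using h1.exp
    have hw : HasDerivAt w (2 * Real.exp (2*x) * (σ x - 1) + Real.exp (2*x) * deriv σ x) x :=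
      he.mul (hdiff.hasDerivAt.sub_const 1)
    refine ⟨hw.differentiableAt, ?_⟩
    rw [hw.deriv]
    have hkey : Real.exp (2*x) * Real.exp (-a*x) = Real.exp ((2-a)*x) := by
      rw [← Real.exp_add]
      ring_nf
    have hepos : (0:ℝ) < Real.exp (2*x) := Real.exp_pos _
    nlinarith [mul_le_mul_of_nonneg_left hineq hepos.le,
      mul_nonneg hepos.le (sq_nonneg (σ x - 1))]
  have hftc := lip_ftc_le ht hwl hφ hd
  have hw0 : w 0 = σ 0 - 1 := by simp [hw_def]
  rw [hw0] at hftc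
  exact hftc


/-- Lemma 1.3 of the paper: a locally Lipschitz function `σ` satisfying the Riccati-type
differential inequality `σ' ≤ -σ² + 1 + C e^{-at}` almost everywhere on `[0,∞)` satisfies
`σ(t) ≤ 1 + (σ(0) + C') ρ(t)` for a constant `C' > 0` depending only on `C` and `a`. -/
theorem stmt1 (C a : ℝ) (hC : 0 < C) (ha : 0 < a) :
    ∃ C' > (0:ℝ), ∀ σ : ℝ → ℝ, LocallyLipschitz σ →
      (∀ᵐ t ∂(volume.restrict (Set.Ici (0:ℝ))),
        DifferentiableAt ℝ σ t ∧ deriv σ t ≤ -σ t ^ 2 + 1 + C * Real.exp (-a * t)) →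
      ∀ t ≥ (0:ℝ), σ t ≤ 1 + (σ 0 + C') *
        (if a < 2 then Real.exp (-a * t)
         else if a = 2 then (t + 1) * Real.exp (-2 * t)
         else Real.exp (-2 * t)) := by
  have hR0 : 0 ≤ Real.sqrt (1+C) := Real.sqrt_nonneg _
  have hR2 : Real.sqrt (1+C) ^ 2 = 1 + C := Real.sq_sqrt (by linarith)
  have hR1 : 1 < Real.sqrt (1+C) := by nlinarith
  set R := Real.sqrt (1+C) with hR_def
  rcases lt_trichotomy a 2 with hlt2 | heq2 | hgt2
  · -- case a < 2
    have h2a : (0:ℝ) < 2 - a := by linarith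
    refine ⟨C/(2-a) + R + 1, by positivity, ?_⟩
    intro σ hσ hae t ht
    have hA := (ae_restrict_iff' measurableSet_Ici).1 hae
    have hσ0 := lower_bound C a hC ha σ hσ hA
    have hG := gronwall C a hC ha σ hσ hA t ht
    rw [int_exp C (2-a) t (by linarith)] at hG
    rw [if_pos hlt2]
    set E2 := Real.exp (-2*t) with hE2_def
    set Ea := Real.exp (-a*t) with hEa_def
    have hE2pos : 0 < E2 := Real.exp_pos _
    have hEapos : 0 < Ea := Real.exp_pos _
    have hE2le : E2 ≤ Ea := Real.exp_le_exp.2 (by nlinarith)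
    have h1 : σ t - 1 = E2 * (Real.exp (2*t) * (σ t - 1)) := by
      rw [hE2_def, ← mul_assoc, ← Real.exp_add]
      norm_num
    have h2 : σ t - 1 ≤ E2 * ((σ 0 - 1) + C * (Real.exp ((2-a)*t) - 1)/(2-a)) := by
      rw [h1]
      exact mul_le_mul_of_nonneg_left (by linarith) hE2pos.le
    have h3 : E2 * Real.exp ((2-a)*t) = Ea := by
      rw [hE2_def, hEa_def, ← Real.exp_add]
      ring_nf
    set q := C/(2-a) with hq_def
    have hqpos : 0 < q := by positivity
    have h2' : σ t - 1 ≤ E2 * (σ 0 - 1) + q * (Ea - E2) := by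
      have expand : E2 * ((σ 0 - 1) + C * (Real.exp ((2-a)*t) - 1)/(2-a)) =
          E2 * (σ 0 - 1) + q * (E2 * Real.exp ((2-a)*t) - E2) := by
        rw [hq_def]
        field_simp
      rw [expand, h3] at h2
      exact h2
    nlinarith [mul_nonneg (show (0:ℝ) ≤ σ 0 + R + 1 by linarith) (sub_nonneg.2 hE2le),
      mul_nonneg hqpos.le hE2pos.le]
  · -- case a = 2
    subst heq2
    refine ⟨C + R + 2, by positivity, ?_⟩
    intro σ hσ hae t ht
    have hA := (ae_restrict_iff' measurableSet_Ici).1 hae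
    have hσ0 := lower_bound C 2 hC ha σ hσ hA
    have hG := gronwall C 2 hC ha σ hσ hA t ht
    have hint0 : ∫ x in (0:ℝ)..t, C * Real.exp ((2-2)*x) = C * t := by
      norm_num [mul_comm]
    rw [hint0] at hG
    rw [if_neg (lt_irrefl 2), if_pos rfl]
    set E2 := Real.exp (-2*t) with hE2_def
    have hE2pos : 0 < E2 := Real.exp_pos _
    have h1 : σ t - 1 = E2 * (Real.exp (2*t) * (σ t - 1)) := by
      rw [hE2_def, ← mul_assoc, ← Real.exp_add]
      norm_num
    have h2 : σ t - 1 ≤ E2 * ((σ 0 - 1) + C * t) := by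
      rw [h1]
      exact mul_le_mul_of_nonneg_left (by linarith) hE2pos.le
    nlinarith [mul_nonneg ht (show (0:ℝ) ≤ σ 0 + R + 2 - C + C by linarith),
      mul_nonneg (mul_nonneg ht (show (0:ℝ) ≤ σ 0 + (C + R + 2) - C by linarith)) hE2pos.le,
      mul_nonneg ht hE2pos.le]
  · -- case a > 2
    have ha2 : (0:ℝ) < a - 2 := by linarith
    refine ⟨C/(a-2) + R + 2, by positivity, ?_⟩
    intro σ hσ hae t ht
    have hA := (ae_restrict_iff' measurableSet_Ici).1 hae
    have hσ0 := lower_bound C a hC ha σ hσ hA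
    have hG := gronwall C a hC ha σ hσ hA t ht
    rw [int_exp C (2-a) t (by linarith)] at hG
    rw [if_neg (by linarith), if_neg (by linarith)]
    set E2 := Real.exp (-2*t) with hE2_def
    have hE2pos : 0 < E2 := Real.exp_pos _
    set Y := Real.exp ((2-a)*t) with hY_def
    have hYpos : 0 < Y := Real.exp_pos _
    have hYle : Y ≤ 1 := Real.exp_le_one_iff.2 (by nlinarith)
    set q := C/(a-2) with hq_def
    have hqpos : 0 < q := by positivity
    have hne1 : (2:ℝ) - a ≠ 0 := by linarith
    have hne2 : a - 2 ≠ 0 := by linarith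
    have hkey : C * (Y - 1)/(2-a) = q * (1 - Y) := by
      rw [hq_def]
      field_simp
      ring
    rw [hkey] at hG
    have hG2 : Real.exp (2*t) * (σ t - 1) ≤ (σ 0 - 1) + q := by
      nlinarith [mul_nonneg hqpos.le hYpos.le]
    have h1 : σ t - 1 = E2 * (Real.exp (2*t) * (σ t - 1)) := by
      rw [hE2_def, ← mul_assoc, ← Real.exp_add]
      norm_num
    have h2 : σ t - 1 ≤ E2 * ((σ 0 - 1) + q) := by
      rw [h1]
      exact mul_le_mul_of_nonneg_left hG2 hE2pos.le
    nlinarith [mul_nonneg hE2pos.le (show (0:ℝ) ≤ R + 1 by linarith)]
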